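/- Let G be a connected graph, w a vertex of G, and for positive integers k, s let G(k,s) denote the graph obtained from the disjoint union G ∪ P_k ∪ P_s by adding an edge from w to one end vertex of the path P_k and an edge from w to one end vertex of the path P_s. Suppose k ≥ s + 2, α ∈ [0,1), and ρ(A_α(G(k,s))) ≥ 2. Then ρ(A_α(G(k,s))) < ρ(A_α(G(k−1, s+1))). -/

import Mathlib

open Matrix Finset SimpleGraph
open scoped Classical

/-- Degree of a vertex (no decidability assumptions). -/
noncomputable def deg {V : Type*} (G : SimpleGraph V) (v : V) : ℕ :=
  (G.neighborSet v).ncard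

/-- The matrix `A_alpha(G) = alpha D(G) + (1-alpha) A(G)`. -/
noncomputable def Aalpha {V : Type*} [Fintype V] (G : SimpleGraph V) (α : ℝ) :
    Matrix V V ℝ :=
  fun i j => if i = j then α * (deg G i : ℝ) else if G.Adj i j then 1 - α else 0

/-- The spectral radius (largest eigenvalue) of a real symmetric matrix,
as the supremum of its eigenvalues. -/
noncomputable def specRad {V : Type*} [Fintype V] (M : Matrix V V ℝ) : ℝ :=
  sSup {t : ℝ | ∃ x : V → ℝ, x ≠ 0 ∧ M.mulVec x = t • x}

/-- The graph `G(k, s)`: attach at the vertex `w` of `G` two pendant paths,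
with `k` and `s` vertices respectively. -/
def pendantPaths {m : ℕ} (G : SimpleGraph (Fin m)) (w : Fin m) (k s : ℕ) :
    SimpleGraph (Fin m ⊕ (Fin k ⊕ Fin s)) :=
  SimpleGraph.fromRel (fun x y =>
    match x, y with
    | Sum.inl a, Sum.inl b => G.Adj a b
    | Sum.inl a, Sum.inr (Sum.inl i) => a = w ∧ (i : ℕ) = 0
    | Sum.inl a, Sum.inr (Sum.inr i) => a = w ∧ (i : ℕ) = 0
    | Sum.inr (Sum.inl i), Sum.inr (Sum.inl j) => (j : ℕ) = (i : ℕ) + 1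
    | Sum.inr (Sum.inr i), Sum.inr (Sum.inr j) => (j : ℕ) = (i : ℕ) + 1
    | _, _ => False)


set_option linter.unusedSectionVars false
set_option linter.unusedVariables false
set_option maxHeartbeats 1000000

namespace LiFengAux

noncomputable def P (t c : ℝ) : ℕ → ℝ
  | 0 => 1
  | 1 => c
  | (n+2) => t * P t c (n+1) - P t c n

variable {t c : ℝ}

lemma P_zero : P t c 0 = 1 := rfl
lemma P_one : P t c 1 = c := rfl
lemma P_rec (n : ℕ) : P t c (n+2) = t * P t c (n+1) - P t c n := rfl

lemma P_one_le_and_lt (ht : 2 ≤ t) (hc : t ≤ c) :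
    ∀ n, 1 ≤ P t c n ∧ P t c n < P t c (n+1) := by
  intro n
  induction n with
  | zero =>
    have h1 : P t c (0+1) = c := rfl
    have h0 : P t c 0 = 1 := rfl
    rw [h1, h0]; constructor <;> linarith
  | succ n ih =>
    obtain ⟨h1, h2⟩ := ih
    have hr : P t c (n+1+1) = t * P t c (n+1) - P t c n := P_rec n
    refine ⟨by linarith, ?_⟩
    rw [hr]
    nlinarith

lemma P_pos (ht : 2 ≤ t) (hc : t ≤ c) (n : ℕ) : 0 < P t c n := by
  have := (P_one_le_and_lt ht hc n).1; linarith

lemma P_strictMono (ht : 2 ≤ t) (hc : t ≤ c) : StrictMono (P t c) :=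
  strictMono_nat_of_lt_succ fun n => (P_one_le_and_lt ht hc n).2

lemma P_det (n : ℕ) :
    P t c (n+1) ^ 2 - P t c n * P t c (n+2) = c^2 - t*c + 1 := by
  induction n with
  | zero =>
    have h1 : P t c (0+1) = c := rfl
    have h0 : P t c 0 = 1 := rfl
    have h2 : P t c (0+2) = t * c - 1 := by rw [P_rec 0, h1, h0]
    rw [h1, h0, h2]; ring
  | succ n ih =>
    have h2 : P t c (n+1+1) = t * P t c (n+1) - P t c n := P_rec n
    rw [P_rec (n+1), h2, P_rec n] at *
    linear_combination ih

end LiFengAux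


namespace LiFengAux

set_option linter.unusedSectionVars false
set_option linter.unusedVariables false
variable {V : Type*} [Fintype V] [Nonempty V]

noncomputable def q (M : Matrix V V ℝ) (x : V → ℝ) : ℝ := x ⬝ᵥ (M *ᵥ x)

lemma dot_self_nonneg (x : V → ℝ) : 0 ≤ x ⬝ᵥ x :=
  Finset.sum_nonneg fun i _ => mul_self_nonneg _

lemma dot_self_pos {x : V → ℝ} (hx : x ≠ 0) : 0 < x ⬝ᵥ x := by
  rcases Function.ne_iff.1 hx with ⟨i, hi⟩
  have h1 : 0 < x i * x i := mul_self_pos.mpr hi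
  have h2 : x i * x i ≤ ∑ j, x j * x j :=
    Finset.single_le_sum (fun j _ => mul_self_nonneg (x j)) (mem_univ i)
  exact lt_of_lt_of_le h1 h2

lemma q_cont (M : Matrix V V ℝ) : Continuous (q M) := by
  unfold q
  simp only [dotProduct, Matrix.mulVec]
  exact continuous_finset_sum _ fun i _ =>
    (continuous_apply i).mul (continuous_finset_sum _ fun j _ =>
      continuous_const.mul (continuous_apply j))

lemma dot_cont : Continuous (fun x : V → ℝ => x ⬝ᵥ x) := by
  simp only [dotProduct]
  exact continuous_finset_sum _ fun i _ => (continuous_apply i).mul (continuous_apply i)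

lemma exists_max (M : Matrix V V ℝ) :
    ∃ x : V → ℝ, x ⬝ᵥ x = 1 ∧ ∀ z : V → ℝ, z ⬝ᵥ z = 1 → q M z ≤ q M x := by
  set S : Set (V → ℝ) := {x | x ⬝ᵥ x = 1} with hS
  have hclosed : IsClosed S := isClosed_eq dot_cont continuous_const
  have hsub : S ⊆ Metric.closedBall 0 1 := by
    intro x hx
    rw [Metric.mem_closedBall, dist_zero_right]
    rw [pi_norm_le_iff_of_nonneg (by norm_num : (0:ℝ) ≤ 1)]
    intro i
    rw [Real.norm_eq_abs, abs_le_one_iff_mul_self_le_one]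
    calc x i * x i ≤ ∑ j, x j * x j :=
          Finset.single_le_sum (fun j _ => mul_self_nonneg (x j)) (mem_univ i)
      _ = 1 := hx
  have hbdd : Bornology.IsBounded S :=
    (Metric.isBounded_closedBall).subset hsub
  have hcomp : IsCompact S := Metric.isCompact_iff_isClosed_bounded.mpr ⟨hclosed, hbdd⟩
  have hne : S.Nonempty := by
    refine ⟨Pi.single (Classical.arbitrary V) 1, ?_⟩
    simp only [hS, Set.mem_setOf_eq, dotProduct, Pi.single_apply]
    simp [Finset.sum_ite_eq']
  obtain ⟨x, hxS, hmax⟩ := hcomp.exists_isMaxOn hne (q_cont M).continuousOn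
  exact ⟨x, hxS, fun z hz => hmax hz⟩

lemma q_smul (M : Matrix V V ℝ) (c : ℝ) (x : V → ℝ) : q M (c • x) = c^2 * q M x := by
  simp only [q, Matrix.mulVec_smul, smul_dotProduct, dotProduct_smul,
    smul_eq_mul]
  ring

lemma q_le_of_max {M : Matrix V V ℝ} {x : V → ℝ} (hx : x ⬝ᵥ x = 1)
    (hmax : ∀ z : V → ℝ, z ⬝ᵥ z = 1 → q M z ≤ q M x) :
    ∀ v : V → ℝ, q M v ≤ q M x * (v ⬝ᵥ v) := by
  intro v
  by_cases hv : v = 0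
  · subst hv; simp [q]
  · have hpos := dot_self_pos hv
    set r := Real.sqrt (v ⬝ᵥ v) with hrdef
    have hr : 0 < r := Real.sqrt_pos.mpr hpos
    have hr2 : r^2 = v ⬝ᵥ v := Real.sq_sqrt hpos.le
    have hz : (r⁻¹ • v) ⬝ᵥ (r⁻¹ • v) = 1 := by
      simp only [smul_dotProduct, dotProduct_smul, smul_eq_mul]
      rw [← hr2]
      have : r ^ 2 = r * r := sq r
      rw [this]; field_simp
    have h1 := hmax _ hz
    rw [q_smul] at h1
    have h2 : r⁻¹^2 = (v ⬝ᵥ v)⁻¹ := by rw [← hr2]; simp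
    rw [h2] at h1
    calc q M v = (v ⬝ᵥ v)⁻¹ * q M v * (v ⬝ᵥ v) := by field_simp
      _ ≤ q M x * (v ⬝ᵥ v) := by
          apply mul_le_mul_of_nonneg_right h1 hpos.le

lemma dot_mulVec_symm {M : Matrix V V ℝ} (hM : M.IsSymm) (u z : V → ℝ) :
    u ⬝ᵥ (M *ᵥ z) = z ⬝ᵥ (M *ᵥ u) := by
  rw [Matrix.dotProduct_mulVec]
  conv_lhs => rw [← hM]
  rw [Matrix.vecMul_transpose, dotProduct_comm]

lemma quad_zero {a b : ℝ} (ha : 0 ≤ a) (h : ∀ ε : ℝ, 0 ≤ 2*ε*b + ε^2*a) : b = 0 := by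
  by_contra hb
  set d := b/(a+1) with hd
  have hane : a + 1 ≠ 0 := by linarith
  have hb' : b = d*(a+1) := by rw [hd]; field_simp
  have h1 := h (-d)
  rw [hb'] at h1
  have h2 : d^2*(a+2) ≤ 0 := by nlinarith [h1]
  have h3 : d = 0 := by nlinarith [sq_nonneg d]
  exact hb (by rw [hb', h3]; ring)

lemma eigen_of_max {M : Matrix V V ℝ} (hM : M.IsSymm) {x : V → ℝ} (hx : x ⬝ᵥ x = 1)
    (hmax : ∀ z : V → ℝ, z ⬝ᵥ z = 1 → q M z ≤ q M x) :
    M *ᵥ x = (q M x) • x := by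
  set l := q M x with hl
  have key := q_le_of_max hx hmax
  have main : ∀ z : V → ℝ, l * (x ⬝ᵥ z) = x ⬝ᵥ (M *ᵥ z) := by
    intro z
    have expand : ∀ ε : ℝ, q M (x + ε • z) = l + 2*ε*(x ⬝ᵥ (M *ᵥ z)) + ε^2 * q M z := by
      intro ε
      have hsymm := dot_mulVec_symm hM z x
      simp only [q, Matrix.mulVec_add, Matrix.mulVec_smul, dotProduct_add,
        add_dotProduct, dotProduct_smul, smul_dotProduct, smul_eq_mul]
      rw [hsymm]
      rw [hl]; simp only [q]; ring
    have expand2 : ∀ ε : ℝ, (x + ε • z) ⬝ᵥ (x + ε • z) = 1 + 2*ε*(x ⬝ᵥ z) + ε^2*(z ⬝ᵥ z) := by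
      intro ε
      have hcomm : z ⬝ᵥ x = x ⬝ᵥ z := dotProduct_comm z x
      simp only [dotProduct_add, add_dotProduct, dotProduct_smul,
        smul_dotProduct, smul_eq_mul]
      rw [hcomm, hx]; ring
    have hq : ∀ ε : ℝ, 0 ≤ 2*ε*(l*(x ⬝ᵥ z) - x ⬝ᵥ (M *ᵥ z)) + ε^2*(l*(z ⬝ᵥ z) - q M z) := by
      intro ε
      have h1 := key (x + ε • z)
      rw [expand ε, expand2 ε] at h1
      nlinarith [h1]
    have ha : 0 ≤ l*(z ⬝ᵥ z) - q M z := by have := key z; linarith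
    have := quad_zero ha hq
    linarith
  funext u
  have h := main (Pi.single u 1)
  have h1 : x ⬝ᵥ Pi.single u 1 = x u := by
    simp [dotProduct, Pi.single_apply, Finset.sum_ite_eq']
  have h2 : x ⬝ᵥ (M *ᵥ Pi.single u 1) = (M *ᵥ x) u := by
    rw [dot_mulVec_symm hM]
    simp [dotProduct, Pi.single_apply, Finset.sum_ite_eq']
  rw [h1, h2] at h
  simp [Pi.smul_apply, smul_eq_mul, ← h]

lemma specRad_eq_max {M : Matrix V V ℝ} (hM : M.IsSymm) {x : V → ℝ} (hx : x ⬝ᵥ x = 1)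
    (hmax : ∀ z : V → ℝ, z ⬝ᵥ z = 1 → q M z ≤ q M x) :
    specRad M = q M x := by
  have heig : M *ᵥ x = q M x • x := eigen_of_max hM hx hmax
  have hxne : x ≠ 0 := by
    intro h; rw [h] at hx; simp [zero_dotProduct] at hx
  have hub : ∀ μ ∈ {t : ℝ | ∃ z : V → ℝ, z ≠ 0 ∧ M *ᵥ z = t • z}, μ ≤ q M x := by
    rintro μ ⟨z, hz0, hz⟩
    have hzz := dot_self_pos hz0
    have hqz : q M z = μ * (z ⬝ᵥ z) := by
      rw [q, hz]; simp [dotProduct_smul, smul_eq_mul]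
    have := q_le_of_max hx hmax z
    rw [hqz] at this
    nlinarith
  apply le_antisymm
  · exact csSup_le ⟨q M x, x, hxne, heig⟩ hub
  · exact le_csSup ⟨q M x, hub⟩ ⟨x, hxne, heig⟩

/-- Packaged spectral facts: nonnegative top eigenvector and Rayleigh bound. -/
lemma specRad_spec (M : Matrix V V ℝ) (hM : M.IsSymm) (hnn : ∀ i j, i ≠ j → 0 ≤ M i j) :
    ∃ x : V → ℝ, (∀ i, 0 ≤ x i) ∧ x ⬝ᵥ x = 1 ∧ M *ᵥ x = specRad M • x ∧
      (∀ z : V → ℝ, q M z ≤ specRad M * (z ⬝ᵥ z)) := by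
  obtain ⟨x, hx, hmax⟩ := exists_max M
  set y : V → ℝ := fun i => |x i| with hy
  have hyy : y ⬝ᵥ y = 1 := by
    simp only [dotProduct, hy, abs_mul_abs_self]
    exact hx
  have hqexp : ∀ v : V → ℝ, q M v = ∑ i, ∑ j, v i * (M i j * v j) := by
    intro v
    simp [q, dotProduct, Matrix.mulVec, Finset.mul_sum]
  have hqy : q M x ≤ q M y := by
    rw [hqexp, hqexp]
    apply Finset.sum_le_sum
    intro i _
    apply Finset.sum_le_sum
    intro j _
    by_cases hij : i = j
    · subst hij
      simp only [hy]
      rw [mul_left_comm, mul_left_comm (|x i|)]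
      rw [abs_mul_abs_self]
    · have hM0 := hnn i j hij
      simp only [hy]
      calc x i * (M i j * x j) = M i j * (x i * x j) := by ring
        _ ≤ M i j * |x i * x j| := by
            apply mul_le_mul_of_nonneg_left (le_abs_self _) hM0
        _ = |x i| * (M i j * |x j|) := by rw [abs_mul]; ring
  have hymax : ∀ z : V → ℝ, z ⬝ᵥ z = 1 → q M z ≤ q M y :=
    fun z hz => (hmax z hz).trans hqy
  have hrad : specRad M = q M y := specRad_eq_max hM hyy hymax
  refine ⟨y, fun i => abs_nonneg _, hyy, ?_, ?_⟩
  · rw [hrad]; exact eigen_of_max hM hyy hymax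
  · intro z; rw [hrad]; exact q_le_of_max hyy hymax z

lemma specRad_gt {M : Matrix V V ℝ} (hM : M.IsSymm) (hnn : ∀ i j, i ≠ j → 0 ≤ M i j)
    {y : V → ℝ} {r : ℝ} (hy : y ≠ 0) (h : r * (y ⬝ᵥ y) < q M y) : r < specRad M := by
  obtain ⟨x, _, _, _, hray⟩ := specRad_spec M hM hnn
  have h1 := hray y
  have h2 := dot_self_pos hy
  nlinarith

end LiFengAux


namespace LiFengAux

variable {m : ℕ} {G : SimpleGraph (Fin m)} {w : Fin m} {K S : ℕ}

lemma adj_ll {a b : Fin m} :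
    (pendantPaths G w K S).Adj (Sum.inl a) (Sum.inl b) ↔ G.Adj a b := by
  simp only [pendantPaths, SimpleGraph.fromRel_adj]
  constructor
  · rintro ⟨h, h2 | h2⟩
    · exact h2
    · exact h2.symm
  · intro h
    exact ⟨by simp [h.ne], Or.inl h⟩

lemma adj_lL {a : Fin m} {i : Fin K} :
    (pendantPaths G w K S).Adj (Sum.inl a) (Sum.inr (Sum.inl i)) ↔ (a = w ∧ (i:ℕ) = 0) := by
  simp only [pendantPaths, SimpleGraph.fromRel_adj]
  constructor
  · rintro ⟨h, h2 | h2⟩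
    · exact h2
    · exact h2.elim
  · intro h
    exact ⟨by simp, Or.inl h⟩

lemma adj_lS {a : Fin m} {i : Fin S} :
    (pendantPaths G w K S).Adj (Sum.inl a) (Sum.inr (Sum.inr i)) ↔ (a = w ∧ (i:ℕ) = 0) := by
  simp only [pendantPaths, SimpleGraph.fromRel_adj]
  constructor
  · rintro ⟨h, h2 | h2⟩
    · exact h2
    · exact h2.elim
  · intro h
    exact ⟨by simp, Or.inl h⟩

lemma adj_LL {i j : Fin K} :
    (pendantPaths G w K S).Adj (Sum.inr (Sum.inl i)) (Sum.inr (Sum.inl j)) ↔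
      ((j:ℕ) = (i:ℕ) + 1 ∨ (i:ℕ) = (j:ℕ) + 1) := by
  simp only [pendantPaths, SimpleGraph.fromRel_adj]
  constructor
  · rintro ⟨h, h2 | h2⟩
    · exact Or.inl h2
    · exact Or.inr h2
  · intro h
    refine ⟨?_, ?_⟩
    · simp only [ne_eq, Sum.inr.injEq, Sum.inl.injEq]
      intro he; subst he; omega
    · exact h

lemma adj_SS {i j : Fin S} :
    (pendantPaths G w K S).Adj (Sum.inr (Sum.inr i)) (Sum.inr (Sum.inr j)) ↔
      ((j:ℕ) = (i:ℕ) + 1 ∨ (i:ℕ) = (j:ℕ) + 1) := by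
  simp only [pendantPaths, SimpleGraph.fromRel_adj]
  constructor
  · rintro ⟨h, h2 | h2⟩
    · exact Or.inl h2
    · exact Or.inr h2
  · intro h
    refine ⟨?_, ?_⟩
    · simp only [ne_eq, Sum.inr.injEq, Sum.inr.injEq]
      intro he; subst he; omega
    · exact h

lemma adj_LS {i : Fin K} {j : Fin S} :
    ¬ (pendantPaths G w K S).Adj (Sum.inr (Sum.inl i)) (Sum.inr (Sum.inr j)) := by
  simp only [pendantPaths, SimpleGraph.fromRel_adj]
  rintro ⟨h, h2 | h2⟩ <;> exact h2

lemma adj_SL {i : Fin S} {j : Fin K} :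
    ¬ (pendantPaths G w K S).Adj (Sum.inr (Sum.inr i)) (Sum.inr (Sum.inl j)) := by
  simp only [pendantPaths, SimpleGraph.fromRel_adj]
  rintro ⟨h, h2 | h2⟩ <;> exact h2

lemma adj_Ll {a : Fin m} {i : Fin K} :
    (pendantPaths G w K S).Adj (Sum.inr (Sum.inl i)) (Sum.inl a) ↔ (a = w ∧ (i:ℕ) = 0) := by
  rw [SimpleGraph.adj_comm]; exact adj_lL

lemma adj_Sl {a : Fin m} {i : Fin S} :
    (pendantPaths G w K S).Adj (Sum.inr (Sum.inr i)) (Sum.inl a) ↔ (a = w ∧ (i:ℕ) = 0) := by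
  rw [SimpleGraph.adj_comm]; exact adj_lS

end LiFengAux
namespace LiFengAux

variable {m : ℕ} {G : SimpleGraph (Fin m)} {w : Fin m} {K S : ℕ}

/-- value of `z` on the long path, extended by `0`. -/
noncomputable def extL {m K S : ℕ} (z : Fin m ⊕ (Fin K ⊕ Fin S) → ℝ) (n : ℕ) : ℝ :=
  if h : n < K then z (Sum.inr (Sum.inl ⟨n, h⟩)) else 0

/-- value of `z` on the short path, extended by `0`. -/
noncomputable def extS {m K S : ℕ} (z : Fin m ⊕ (Fin K ⊕ Fin S) → ℝ) (n : ℕ) : ℝ :=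
  if h : n < S then z (Sum.inr (Sum.inr ⟨n, h⟩)) else 0

lemma extL_of_lt {z : Fin m ⊕ (Fin K ⊕ Fin S) → ℝ} {n : ℕ} (h : n < K) :
    extL z n = z (Sum.inr (Sum.inl ⟨n, h⟩)) := dif_pos h

lemma extS_of_lt {z : Fin m ⊕ (Fin K ⊕ Fin S) → ℝ} {n : ℕ} (h : n < S) :
    extS z n = z (Sum.inr (Sum.inr ⟨n, h⟩)) := dif_pos h

lemma extL_of_ge {z : Fin m ⊕ (Fin K ⊕ Fin S) → ℝ} {n : ℕ} (h : ¬ n < K) :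
    extL z n = 0 := dif_neg h

lemma extS_of_ge {z : Fin m ⊕ (Fin K ⊕ Fin S) → ℝ} {n : ℕ} (h : ¬ n < S) :
    extS z n = 0 := dif_neg h

lemma fin_sum_coe_eq {n : ℕ} (c : ℕ) (f : Fin n → ℝ) :
    ∑ j : Fin n, (if (j:ℕ) = c then f j else 0) =
      if h : c < n then f ⟨c, h⟩ else 0 := by
  split_ifs with h
  · rw [Finset.sum_eq_single (⟨c, h⟩ : Fin n)]
    · simp
    · intro j _ hj
      rw [if_neg]
      intro he
      exact hj (Fin.ext he)
    · intro hmem; exact absurd (Finset.mem_univ _) hmem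
  · apply Finset.sum_eq_zero
    intro j _
    rw [if_neg]
    intro he
    exact h (he ▸ j.isLt)

lemma sum_ite_or {ι : Type*} [Fintype ι] (p q : ι → Prop) (f : ι → ℝ)
    (hpq : ∀ i, ¬ (p i ∧ q i)) :
    ∑ i, (if p i ∨ q i then f i else 0) =
      (∑ i, if p i then f i else 0) + ∑ i, (if q i then f i else 0) := by
  rw [← Finset.sum_add_distrib]
  apply Finset.sum_congr rfl
  intro i _
  by_cases hp : p i
  · rw [if_pos (Or.inl hp), if_pos hp, if_neg (fun hq => hpq i ⟨hp, hq⟩), add_zero]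
  · by_cases hq : q i
    · rw [if_pos (Or.inr hq), if_neg hp, if_pos hq, zero_add]
    · rw [if_neg (fun h => h.elim hp hq), if_neg hp, if_neg hq, add_zero]

/-- Neighbor sum at a long-path vertex. -/
lemma nsum_L (z : Fin m ⊕ (Fin K ⊕ Fin S) → ℝ) (i : Fin K) :
    (∑ u : Fin m ⊕ (Fin K ⊕ Fin S),
        if (pendantPaths G w K S).Adj (Sum.inr (Sum.inl i)) u then z u else 0) =
      (if (i:ℕ) = 0 then z (Sum.inl w) else 0) + extL z ((i:ℕ)+1)
        + (if (i:ℕ) = 0 then 0 else extL z ((i:ℕ)-1)) := by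
  rw [Fintype.sum_sum_type, Fintype.sum_sum_type]
  have h1 : (∑ a : Fin m,
      if (pendantPaths G w K S).Adj (Sum.inr (Sum.inl i)) (Sum.inl a) then z (Sum.inl a) else 0)
      = if (i:ℕ) = 0 then z (Sum.inl w) else 0 := by
    simp only [adj_Ll]
    by_cases hi : (i:ℕ) = 0
    · simp only [hi, and_true, if_pos]
      rw [Finset.sum_ite_eq' Finset.univ w (fun a => z (Sum.inl a))]
      simp [hi]
    · simp [hi]
  have h2 : (∑ j : Fin K,
      if (pendantPaths G w K S).Adj (Sum.inr (Sum.inl i)) (Sum.inr (Sum.inl j)) then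
        z (Sum.inr (Sum.inl j)) else 0)
      = extL z ((i:ℕ)+1) + (if (i:ℕ) = 0 then 0 else extL z ((i:ℕ)-1)) := by
    have e1 : (∑ j : Fin K,
        if (pendantPaths G w K S).Adj (Sum.inr (Sum.inl i)) (Sum.inr (Sum.inl j)) then
          z (Sum.inr (Sum.inl j)) else 0)
        = (∑ j : Fin K, if (j:ℕ) = (i:ℕ)+1 then z (Sum.inr (Sum.inl j)) else 0)
          + (∑ j : Fin K, if (i:ℕ) = (j:ℕ)+1 then z (Sum.inr (Sum.inl j)) else 0) := by
      rw [← Finset.sum_add_distrib]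
      apply Finset.sum_congr rfl
      intro j _
      by_cases hp : (j:ℕ) = (i:ℕ)+1
      · rw [if_pos ((adj_LL).mpr (Or.inl hp)), if_pos hp, if_neg (by omega), add_zero]
      · by_cases hq : (i:ℕ) = (j:ℕ)+1
        · rw [if_pos ((adj_LL).mpr (Or.inr hq)), if_neg hp, if_pos hq, zero_add]
        · rw [if_neg (fun h => ((adj_LL).mp h).elim hp hq), if_neg hp, if_neg hq, add_zero]
    rw [e1]
    congr 1
    · rw [fin_sum_coe_eq]
      unfold extL
      rfl
    · by_cases hi : (i:ℕ) = 0
      · rw [if_pos hi]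
        apply Finset.sum_eq_zero
        intro j _
        rw [if_neg (by omega)]
      · rw [if_neg hi]
        have : ∀ j : Fin K, ((i:ℕ) = (j:ℕ) + 1) = ((j:ℕ) = (i:ℕ) - 1) := by
          intro j; apply propext; omega
        simp only [this]
        rw [fin_sum_coe_eq]
        unfold extL
        rfl
  have h3 : (∑ j : Fin S,
      if (pendantPaths G w K S).Adj (Sum.inr (Sum.inl i)) (Sum.inr (Sum.inr j)) then
        z (Sum.inr (Sum.inr j)) else 0) = 0 := by
    apply Finset.sum_eq_zero
    intro j _
    rw [if_neg adj_LS]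
  rw [h1, h2, h3]
  ring

/-- Neighbor sum at a short-path vertex. -/
lemma nsum_S (z : Fin m ⊕ (Fin K ⊕ Fin S) → ℝ) (i : Fin S) :
    (∑ u : Fin m ⊕ (Fin K ⊕ Fin S),
        if (pendantPaths G w K S).Adj (Sum.inr (Sum.inr i)) u then z u else 0) =
      (if (i:ℕ) = 0 then z (Sum.inl w) else 0) + extS z ((i:ℕ)+1)
        + (if (i:ℕ) = 0 then 0 else extS z ((i:ℕ)-1)) := by
  rw [Fintype.sum_sum_type, Fintype.sum_sum_type]
  have h1 : (∑ a : Fin m,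
      if (pendantPaths G w K S).Adj (Sum.inr (Sum.inr i)) (Sum.inl a) then z (Sum.inl a) else 0)
      = if (i:ℕ) = 0 then z (Sum.inl w) else 0 := by
    simp only [adj_Sl]
    by_cases hi : (i:ℕ) = 0
    · simp only [hi, and_true, if_pos]
      rw [Finset.sum_ite_eq' Finset.univ w (fun a => z (Sum.inl a))]
      simp [hi]
    · simp [hi]
  have h2 : (∑ j : Fin S,
      if (pendantPaths G w K S).Adj (Sum.inr (Sum.inr i)) (Sum.inr (Sum.inr j)) then
        z (Sum.inr (Sum.inr j)) else 0)
      = extS z ((i:ℕ)+1) + (if (i:ℕ) = 0 then 0 else extS z ((i:ℕ)-1)) := by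
    have e1 : (∑ j : Fin S,
        if (pendantPaths G w K S).Adj (Sum.inr (Sum.inr i)) (Sum.inr (Sum.inr j)) then
          z (Sum.inr (Sum.inr j)) else 0)
        = (∑ j : Fin S, if (j:ℕ) = (i:ℕ)+1 then z (Sum.inr (Sum.inr j)) else 0)
          + (∑ j : Fin S, if (i:ℕ) = (j:ℕ)+1 then z (Sum.inr (Sum.inr j)) else 0) := by
      rw [← Finset.sum_add_distrib]
      apply Finset.sum_congr rfl
      intro j _
      by_cases hp : (j:ℕ) = (i:ℕ)+1
      · rw [if_pos ((adj_SS).mpr (Or.inl hp)), if_pos hp, if_neg (by omega), add_zero]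
      · by_cases hq : (i:ℕ) = (j:ℕ)+1
        · rw [if_pos ((adj_SS).mpr (Or.inr hq)), if_neg hp, if_pos hq, zero_add]
        · rw [if_neg (fun h => ((adj_SS).mp h).elim hp hq), if_neg hp, if_neg hq, add_zero]
    rw [e1]
    congr 1
    · rw [fin_sum_coe_eq]
      unfold extS
      rfl
    · by_cases hi : (i:ℕ) = 0
      · rw [if_pos hi]
        apply Finset.sum_eq_zero
        intro j _
        rw [if_neg (by omega)]
      · rw [if_neg hi]
        have : ∀ j : Fin S, ((i:ℕ) = (j:ℕ) + 1) = ((j:ℕ) = (i:ℕ) - 1) := by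
          intro j; apply propext; omega
        simp only [this]
        rw [fin_sum_coe_eq]
        unfold extS
        rfl
  have h3 : (∑ j : Fin K,
      if (pendantPaths G w K S).Adj (Sum.inr (Sum.inr i)) (Sum.inr (Sum.inl j)) then
        z (Sum.inr (Sum.inl j)) else 0) = 0 := by
    apply Finset.sum_eq_zero
    intro j _
    rw [if_neg adj_SL]
  rw [h1, h2, h3]
  ring

/-- Neighbor sum at a `G`-vertex. -/
lemma nsum_G (z : Fin m ⊕ (Fin K ⊕ Fin S) → ℝ) (a : Fin m) :
    (∑ u : Fin m ⊕ (Fin K ⊕ Fin S),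
        if (pendantPaths G w K S).Adj (Sum.inl a) u then z u else 0) =
      (∑ b : Fin m, if G.Adj a b then z (Sum.inl b) else 0)
        + (if a = w then extL z 0 + extS z 0 else 0) := by
  rw [Fintype.sum_sum_type, Fintype.sum_sum_type]
  have h1 : (∑ b : Fin m,
      if (pendantPaths G w K S).Adj (Sum.inl a) (Sum.inl b) then z (Sum.inl b) else 0)
      = ∑ b : Fin m, if G.Adj a b then z (Sum.inl b) else 0 := by
    simp only [adj_ll]
  have h2 : (∑ j : Fin K,
      if (pendantPaths G w K S).Adj (Sum.inl a) (Sum.inr (Sum.inl j)) then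
        z (Sum.inr (Sum.inl j)) else 0) = if a = w then extL z 0 else 0 := by
    simp only [adj_lL]
    by_cases ha : a = w
    · simp only [ha, true_and, if_pos]
      rw [fin_sum_coe_eq]
      unfold extL
      rfl
    · simp [ha]
  have h3 : (∑ j : Fin S,
      if (pendantPaths G w K S).Adj (Sum.inl a) (Sum.inr (Sum.inr j)) then
        z (Sum.inr (Sum.inr j)) else 0) = if a = w then extS z 0 else 0 := by
    simp only [adj_lS]
    by_cases ha : a = w
    · simp only [ha, true_and, if_pos]
      rw [fin_sum_coe_eq]
      unfold extS
      rfl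
    · simp [ha]
  rw [h1, h2, h3]
  by_cases ha : a = w <;> simp [ha]

end LiFengAux
namespace LiFengAux

set_option linter.unusedSectionVars false

variable {m : ℕ} {G : SimpleGraph (Fin m)} {w : Fin m} {K S : ℕ}

lemma deg_eq_sum {V' : Type*} [Fintype V'] (H : SimpleGraph V') (v : V') :
    (deg H v : ℝ) = ∑ u, if H.Adj v u then (1:ℝ) else 0 := by
  rw [Finset.sum_boole]
  congr 1
  unfold deg
  rw [Set.ncard_eq_toFinset_card']
  congr 1
  ext u
  simp [SimpleGraph.neighborSet]
  exact Set.mem_toFinset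

lemma mulVec_Aalpha {V' : Type*} [Fintype V'] (H : SimpleGraph V') (α : ℝ) (z : V' → ℝ)
    (v : V') :
    (Aalpha H α *ᵥ z) v =
      α * (deg H v : ℝ) * z v + (1-α) * ∑ u, (if H.Adj v u then z u else 0) := by
  simp only [Matrix.mulVec, dotProduct, Aalpha]
  have key : ∀ u, (if v = u then α * (deg H v : ℝ) else if H.Adj v u then 1-α else 0) * z u
      = (if v = u then α * (deg H v : ℝ) * z u else 0)
        + (if H.Adj v u then (1-α) * z u else 0) := by
    intro u
    by_cases h : v = u
    · subst h
      rw [if_pos rfl, if_pos rfl, if_neg (H.irrefl), add_zero]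
    · rw [if_neg h, if_neg h, zero_add]
      by_cases ha : H.Adj v u
      · rw [if_pos ha, if_pos ha]
      · rw [if_neg ha, if_neg ha, zero_mul]
  calc (∑ u, (if v = u then α * (deg H v : ℝ) else if H.Adj v u then 1-α else 0) * z u)
      = ∑ u, ((if v = u then α * (deg H v : ℝ) * z u else 0)
          + (if H.Adj v u then (1-α) * z u else 0)) :=
        Finset.sum_congr rfl (fun u _ => key u)
    _ = (∑ u, if v = u then α * (deg H v : ℝ) * z u else 0)
          + ∑ u, (if H.Adj v u then (1-α) * z u else 0) := Finset.sum_add_distrib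
    _ = α * (deg H v : ℝ) * z v + (1-α) * ∑ u, (if H.Adj v u then z u else 0) := by
        congr 1
        · rw [Finset.sum_ite_eq]
          simp
        · rw [Finset.mul_sum]
          apply Finset.sum_congr rfl
          intro u _
          by_cases ha : H.Adj v u
          · rw [if_pos ha, if_pos ha]
          · rw [if_neg ha, if_neg ha, mul_zero]

lemma Aalpha_isSymm {V' : Type*} [Fintype V'] (H : SimpleGraph V') (α : ℝ) :
    (Aalpha H α).IsSymm := by
  apply Matrix.IsSymm.ext
  intro i j
  unfold Aalpha
  by_cases h : i = j
  · subst h; rfl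
  · have h' : ¬ j = i := fun he => h he.symm
    rw [if_neg h, if_neg h']
    by_cases ha : H.Adj j i
    · rw [if_pos ha, if_pos ha.symm]
    · rw [if_neg ha, if_neg (fun hb => ha hb.symm)]

lemma Aalpha_offdiag {V' : Type*} [Fintype V'] (H : SimpleGraph V') {α : ℝ} (hα1 : α ≤ 1) :
    ∀ i j, i ≠ j → 0 ≤ Aalpha H α i j := by
  intro i j h
  unfold Aalpha
  rw [if_neg h]
  by_cases ha : H.Adj i j
  · rw [if_pos ha]; linarith
  · rw [if_neg ha]

lemma reach (hG : G.Preconnected) (hK : 1 ≤ K) (hS : 1 ≤ S) :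
    ∀ v, (pendantPaths G w K S).Reachable (Sum.inl w) v := by
  have hL : ∀ (n : ℕ) (h : n < K),
      (pendantPaths G w K S).Reachable (Sum.inl w) (Sum.inr (Sum.inl ⟨n, h⟩)) := by
    intro n
    induction n with
    | zero => exact fun h => (adj_lL.mpr ⟨rfl, rfl⟩).reachable
    | succ n ih =>
      intro h
      have h' : n < K := Nat.lt_of_succ_lt h
      exact (ih h').trans (adj_LL.mpr (Or.inl rfl)).reachable
  have hS' : ∀ (n : ℕ) (h : n < S),
      (pendantPaths G w K S).Reachable (Sum.inl w) (Sum.inr (Sum.inr ⟨n, h⟩)) := by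
    intro n
    induction n with
    | zero => exact fun h => (adj_lS.mpr ⟨rfl, rfl⟩).reachable
    | succ n ih =>
      intro h
      have h' : n < S := Nat.lt_of_succ_lt h
      exact (ih h').trans (adj_SS.mpr (Or.inl rfl)).reachable
  intro v
  match v with
  | Sum.inl a =>
    exact (hG w a).map ⟨Sum.inl, fun h => adj_ll.mpr h⟩
  | Sum.inr (Sum.inl i) =>
    have := hL (i:ℕ) i.isLt
    simpa using this
  | Sum.inr (Sum.inr i) =>
    have := hS' (i:ℕ) i.isLt
    simpa using this

lemma xw_pos {α ρ : ℝ} (hα1 : α < 1) {x : Fin m ⊕ (Fin K ⊕ Fin S) → ℝ}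
    (hx0 : ∀ v, 0 ≤ x v) (hxx : x ⬝ᵥ x = 1)
    (heig : (Aalpha (pendantPaths G w K S) α) *ᵥ x = ρ • x)
    (hG : G.Preconnected) (hK : 1 ≤ K) (hS : 1 ≤ S) : 0 < x (Sum.inl w) := by
  rcases lt_or_eq_of_le (hx0 (Sum.inl w)) with h | h
  · exact h
  exfalso
  have hw0 : x (Sum.inl w) = 0 := h.symm
  have prop : ∀ v u, x v = 0 → (pendantPaths G w K S).Adj v u → x u = 0 := by
    intro v u hv hadj
    have he := congrFun heig v
    rw [mulVec_Aalpha] at he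
    simp only [Pi.smul_apply, smul_eq_mul] at he
    rw [hv, mul_zero, mul_zero, zero_add] at he
    have h1α : (0:ℝ) < 1 - α := by linarith
    have hsum : (∑ u', if (pendantPaths G w K S).Adj v u' then x u' else 0) = 0 :=
      (mul_eq_zero.mp he).resolve_left (by linarith)
    have hterm := (Finset.sum_eq_zero_iff_of_nonneg
      (fun u' _ => by
        by_cases ha : (pendantPaths G w K S).Adj v u'
        · rw [if_pos ha]; exact hx0 u'
        · rw [if_neg ha])).mp hsum u (Finset.mem_univ u)
    rw [if_pos hadj] at hterm
    exact hterm
  have aux : ∀ (u v : Fin m ⊕ (Fin K ⊕ Fin S)) (p : (pendantPaths G w K S).Walk u v),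
      x u = 0 → x v = 0 := by
    intro u v p
    induction p with
    | nil => exact id
    | cons hadj q ih => exact fun hu => ih (prop _ _ hu hadj)
  have hall : ∀ v, x v = 0 := by
    intro v
    obtain ⟨p⟩ := reach hG hK hS v
    exact aux _ _ p hw0
  rw [dotProduct] at hxx
  simp only [hall, mul_zero, Finset.sum_const_zero] at hxx
  exact zero_ne_one hxx

lemma extL_ones (n : ℕ) :
    extL (m := m) (K := K) (S := S) (fun _ => (1:ℝ)) n = if n < K then 1 else 0 := by
  unfold extL
  split_ifs <;> rfl

lemma extS_ones (n : ℕ) :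
    extS (m := m) (K := K) (S := S) (fun _ => (1:ℝ)) n = if n < S then 1 else 0 := by
  unfold extS
  split_ifs <;> rfl

lemma deg_L (i : Fin K) :
    (deg (pendantPaths G w K S) (Sum.inr (Sum.inl i)) : ℝ) =
      (if (i:ℕ) = 0 then 1 else 0) + (if (i:ℕ)+1 < K then 1 else 0)
        + (if (i:ℕ) = 0 then 0 else 1) := by
  rw [deg_eq_sum, nsum_L (fun _ => (1:ℝ)) i, extL_ones]
  congr 1
  by_cases hi : (i:ℕ) = 0
  · simp [hi]
  · rw [if_neg hi, if_neg hi, extL_ones, if_pos (by have := i.isLt; omega)]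

lemma deg_S (i : Fin S) :
    (deg (pendantPaths G w K S) (Sum.inr (Sum.inr i)) : ℝ) =
      (if (i:ℕ) = 0 then 1 else 0) + (if (i:ℕ)+1 < S then 1 else 0)
        + (if (i:ℕ) = 0 then 0 else 1) := by
  rw [deg_eq_sum, nsum_S (fun _ => (1:ℝ)) i, extS_ones]
  congr 1
  by_cases hi : (i:ℕ) = 0
  · simp [hi]
  · rw [if_neg hi, if_neg hi, extS_ones, if_pos (by have := i.isLt; omega)]

lemma deg_l (a : Fin m) (hK : 1 ≤ K) (hS : 1 ≤ S) :
    (deg (pendantPaths G w K S) (Sum.inl a) : ℝ) =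
      (∑ b, if G.Adj a b then (1:ℝ) else 0) + (if a = w then 2 else 0) := by
  rw [deg_eq_sum, nsum_G (fun _ => (1:ℝ)) a]
  congr 1
  by_cases ha : a = w
  · rw [if_pos ha, if_pos ha, extL_ones, extS_ones, if_pos (by omega), if_pos (by omega)]
    norm_num
  · rw [if_neg ha, if_neg ha]

end LiFengAux
namespace LiFengAux

lemma seq_P {t c : ℝ} (K : ℕ) (R : ℕ → ℝ) (h1 : R 1 = c * R 0)
    (hrec : ∀ j, 1 ≤ j → j + 1 ≤ K → R (j+1) = t * R j - R (j-1)) :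
    ∀ j, j ≤ K → R j = P t c j * R 0 := by
  intro j
  induction j using Nat.twoStepInduction with
  | zero => intro _; rw [P_zero]; ring
  | one => intro _; rw [P_one]; exact h1
  | more j ih ih1 =>
    intro h
    have e : R (j+2) = t * R (j+1) - R j := by
      have := hrec (j+1) (by omega) (by omega)
      simpa using this
    rw [e, ih1 (by omega), ih (by omega), P_rec]
    ring

end LiFengAux

theorem stmt_9 {m : ℕ} (G : SimpleGraph (Fin m)) (hG : G.Connected) (w : Fin m)
    (k s : ℕ) (hs : 1 ≤ s) (hk : s + 2 ≤ k)
    (α : ℝ) (hα0 : 0 ≤ α) (hα1 : α < 1)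
    (hρ : 2 ≤ specRad (Aalpha (pendantPaths G w k s) α)) :
    specRad (Aalpha (pendantPaths G w k s) α) <
      specRad (Aalpha (pendantPaths G w (k - 1) (s + 1)) α) := by
  classical
  have hk3 : 3 ≤ k := by omega
  have hVne : Nonempty (Fin m ⊕ (Fin k ⊕ Fin s)) := ⟨Sum.inl w⟩
  have hVne' : Nonempty (Fin m ⊕ (Fin (k-1) ⊕ Fin (s+1))) := ⟨Sum.inl w⟩
  have h1α : (0:ℝ) < 1 - α := by linarith
  obtain ⟨x, hx0, hxx, heig, hray⟩ :=
    LiFengAux.specRad_spec (Aalpha (pendantPaths G w k s) α)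
      (LiFengAux.Aalpha_isSymm _ α) (LiFengAux.Aalpha_offdiag _ hα1.le)
  set ρ := specRad (Aalpha (pendantPaths G w k s) α) with hρdef
  have hρ2 : 2 ≤ ρ := hρ
  set xw := x (Sum.inl w) with hxwdef
  have hxw : 0 < xw :=
    LiFengAux.xw_pos hα1 hx0 hxx heig hG.preconnected (by omega) (by omega)
  set t := (ρ - 2*α)/(1-α) with htdef
  set c := (ρ - α)/(1-α) with hcdef
  have ht1 : t * (1-α) = ρ - 2*α := by rw [htdef]; field_simp
  have hc1 : c * (1-α) = ρ - α := by rw [hcdef]; field_simp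
  have ht2 : 2 ≤ t := by rw [htdef, le_div_iff₀ h1α]; linarith
  have htc : t ≤ c := by
    rw [htdef, hcdef, div_le_div_iff₀ h1α h1α]; nlinarith
  set Pc : ℕ → ℝ := LiFengAux.P t c with hPcdef
  have hPpos : ∀ n, 0 < Pc n := LiFengAux.P_pos ht2 htc
  have hPmono : StrictMono Pc := LiFengAux.P_strictMono ht2 htc
  have hPrec : ∀ n, Pc (n+2) = t * Pc (n+1) - Pc n := fun n => LiFengAux.P_rec n
  have hP0 : Pc 0 = 1 := rfl
  have hP1 : Pc 1 = c := rfl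
  -- eigen-equations for x
  have heq : ∀ v, α * (deg (pendantPaths G w k s) v : ℝ) * x v
      + (1-α) * ∑ u, (if (pendantPaths G w k s).Adj v u then x u else 0) = ρ * x v := by
    intro v
    have h2 := congrFun heig v
    rw [LiFengAux.mulVec_Aalpha] at h2
    simpa using h2
  have heqL : ∀ (n : ℕ) (h : n < k),
      α * ((if n = 0 then 1 else 0) + (if n+1 < k then 1 else 0)
        + (if n = 0 then 0 else 1)) * LiFengAux.extL x n
      + (1-α) * ((if n = 0 then xw else 0) + LiFengAux.extL x (n+1)
        + (if n = 0 then 0 else LiFengAux.extL x (n-1)))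
      = ρ * LiFengAux.extL x n := by
    intro n h
    have h2 := heq (Sum.inr (Sum.inl ⟨n, h⟩))
    rw [LiFengAux.nsum_L, LiFengAux.deg_L] at h2
    simp only [Fin.val_mk] at h2
    rw [LiFengAux.extL_of_lt h]
    exact h2
  have heqS : ∀ (n : ℕ) (h : n < s),
      α * ((if n = 0 then 1 else 0) + (if n+1 < s then 1 else 0)
        + (if n = 0 then 0 else 1)) * LiFengAux.extS x n
      + (1-α) * ((if n = 0 then xw else 0) + LiFengAux.extS x (n+1)
        + (if n = 0 then 0 else LiFengAux.extS x (n-1)))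
      = ρ * LiFengAux.extS x n := by
    intro n h
    have h2 := heq (Sum.inr (Sum.inr ⟨n, h⟩))
    rw [LiFengAux.nsum_S, LiFengAux.deg_S] at h2
    simp only [Fin.val_mk] at h2
    rw [LiFengAux.extS_of_lt h]
    exact h2
  -- the reversed long-path sequence
  set RL : ℕ → ℝ := fun j => if j = k then xw else LiFengAux.extL x (k-1-j) with hRLdef
  have hRL1 : RL 1 = c * RL 0 := by
    simp only [hRLdef]
    rw [if_neg (by omega), if_neg (by omega)]
    have h := heqL (k-1) (by omega)
    rw [if_neg (by omega : ¬ (k-1 = 0)), if_neg (by omega : ¬ (k-1+1 < k)),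
      if_neg (by omega : ¬ (k-1 = 0)), if_neg (by omega : ¬ (k-1 = 0)),
      if_neg (by omega : ¬ (k-1 = 0)),
      LiFengAux.extL_of_ge (by omega : ¬ (k-1+1 < k))] at h
    have e1 : k - 1 - 1 = k - 2 := by omega
    have e2 : k - 1 - 0 = k - 1 := by omega
    rw [e1, e2]
    have e3 : k - 1 - 1 = k - 2 := by omega
    rw [e3] at h
    have h2 : (1-α) * LiFengAux.extL x (k-2)
        = (1-α) * (c * LiFengAux.extL x (k-1)) := by
      linear_combination h - LiFengAux.extL x (k-1) * hc1
    exact mul_left_cancel₀ (ne_of_gt h1α) h2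
  have hRLrec : ∀ j, 1 ≤ j → j + 1 ≤ k → RL (j+1) = t * RL j - RL (j-1) := by
    intro j hj hjk
    by_cases hjtop : j + 1 = k
    · simp only [hRLdef]
      rw [if_pos hjtop, if_neg (by omega), if_neg (by omega)]
      have e1 : k - 1 - j = 0 := by omega
      have e2 : k - 1 - (j-1) = 1 := by omega
      rw [e1, e2]
      have h := heqL 0 (by omega)
      rw [if_pos rfl, if_pos rfl, if_pos rfl, if_pos rfl, if_pos (by omega : 0+1 < k)] at h
      have e3 : (0:ℕ)+1 = 1 := rfl
      rw [e3] at h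
      have h2 : (1-α) * xw = (1-α) * (t * LiFengAux.extL x 0 - LiFengAux.extL x 1) := by
        linear_combination h - LiFengAux.extL x 0 * ht1
      exact mul_left_cancel₀ (ne_of_gt h1α) h2
    · simp only [hRLdef]
      rw [if_neg (by omega), if_neg (by omega), if_neg (by omega)]
      have hn1 : 1 ≤ k - 1 - j := by omega
      have h := heqL (k-1-j) (by omega)
      rw [if_neg (by omega : ¬ (k-1-j = 0)), if_pos (by omega : k-1-j+1 < k),
        if_neg (by omega : ¬ (k-1-j = 0)), if_neg (by omega : ¬ (k-1-j = 0)),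
        if_neg (by omega : ¬ (k-1-j = 0))] at h
      have e1 : k - 1 - (j+1) = (k-1-j) - 1 := by omega
      have e2 : k - 1 - (j-1) = (k-1-j) + 1 := by omega
      rw [e1, e2]
      have h2 : (1-α) * LiFengAux.extL x ((k-1-j) - 1)
          = (1-α) * (t * LiFengAux.extL x (k-1-j) - LiFengAux.extL x ((k-1-j)+1)) := by
        linear_combination h - LiFengAux.extL x (k-1-j) * ht1
      exact mul_left_cancel₀ (ne_of_gt h1α) h2
  have hRLall : ∀ j, j ≤ k → RL j = Pc j * RL 0 :=
    LiFengAux.seq_P k RL hRL1 hRLrec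
  have hRL0 : RL 0 = LiFengAux.extL x (k-1) := by
    simp only [hRLdef]
    rw [if_neg (by omega), Nat.sub_zero]
  have hxwE : xw = Pc k * LiFengAux.extL x (k-1) := by
    have h := hRLall k le_rfl
    rw [hRL0] at h
    have e : RL k = xw := by simp [hRLdef]
    rw [e] at h; exact h
  have hXL0 : LiFengAux.extL x 0 = Pc (k-1) * LiFengAux.extL x (k-1) := by
    have h := hRLall (k-1) (by omega)
    rw [hRL0] at h
    have e : RL (k-1) = LiFengAux.extL x 0 := by
      simp [hRLdef, show ¬ (k-1 = k) by omega, show k-1-(k-1) = 0 by omega]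
    rw [e] at h; exact h
  -- the reversed short-path sequence
  set RS : ℕ → ℝ := fun j => if j = s then xw else LiFengAux.extS x (s-1-j) with hRSdef
  have hRS1 : RS 1 = c * RS 0 := by
    by_cases hs1 : s = 1
    · simp only [hRSdef]
      rw [if_pos (by omega), if_neg (by omega)]
      have h := heqS 0 (by omega)
      rw [if_pos rfl, if_pos rfl, if_pos rfl, if_pos rfl, if_neg (by omega : ¬ (0+1 < s)),
        LiFengAux.extS_of_ge (by omega : ¬ (0+1 < s))] at h
      rw [show s-1-0 = 0 by omega]
      have h2 : (1-α) * xw = (1-α) * (c * LiFengAux.extS x 0) := by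
        linear_combination h - LiFengAux.extS x 0 * hc1
      exact mul_left_cancel₀ (ne_of_gt h1α) h2
    · simp only [hRSdef]
      rw [if_neg (by omega), if_neg (by omega)]
      have h := heqS (s-1) (by omega)
      rw [if_neg (by omega : ¬ (s-1 = 0)), if_neg (by omega : ¬ (s-1+1 < s)),
        if_neg (by omega : ¬ (s-1 = 0)), if_neg (by omega : ¬ (s-1 = 0)),
        if_neg (by omega : ¬ (s-1 = 0)),
        LiFengAux.extS_of_ge (by omega : ¬ (s-1+1 < s))] at h
      rw [show s-1-1 = s-2 by omega, show s-1-0 = s-1 by omega]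
      rw [show s-1-1 = s-2 by omega] at h
      have h2 : (1-α) * LiFengAux.extS x (s-2)
          = (1-α) * (c * LiFengAux.extS x (s-1)) := by
        linear_combination h - LiFengAux.extS x (s-1) * hc1
      exact mul_left_cancel₀ (ne_of_gt h1α) h2
  have hRSrec : ∀ j, 1 ≤ j → j + 1 ≤ s → RS (j+1) = t * RS j - RS (j-1) := by
    intro j hj hjs
    by_cases hjtop : j + 1 = s
    · simp only [hRSdef]
      rw [if_pos hjtop, if_neg (by omega), if_neg (by omega)]
      have e1 : s - 1 - j = 0 := by omega
      have e2 : s - 1 - (j-1) = 1 := by omega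
      rw [e1, e2]
      have h := heqS 0 (by omega)
      rw [if_pos rfl, if_pos rfl, if_pos rfl, if_pos rfl, if_pos (by omega : 0+1 < s)] at h
      have e3 : (0:ℕ)+1 = 1 := rfl
      rw [e3] at h
      have h2 : (1-α) * xw = (1-α) * (t * LiFengAux.extS x 0 - LiFengAux.extS x 1) := by
        linear_combination h - LiFengAux.extS x 0 * ht1
      exact mul_left_cancel₀ (ne_of_gt h1α) h2
    · simp only [hRSdef]
      rw [if_neg (by omega), if_neg (by omega), if_neg (by omega)]
      have h := heqS (s-1-j) (by omega)
      rw [if_neg (by omega : ¬ (s-1-j = 0)), if_pos (by omega : s-1-j+1 < s),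
        if_neg (by omega : ¬ (s-1-j = 0)), if_neg (by omega : ¬ (s-1-j = 0)),
        if_neg (by omega : ¬ (s-1-j = 0))] at h
      have e1 : s - 1 - (j+1) = (s-1-j) - 1 := by omega
      have e2 : s - 1 - (j-1) = (s-1-j) + 1 := by omega
      rw [e1, e2]
      have h2 : (1-α) * LiFengAux.extS x ((s-1-j) - 1)
          = (1-α) * (t * LiFengAux.extS x (s-1-j) - LiFengAux.extS x ((s-1-j)+1)) := by
        linear_combination h - LiFengAux.extS x (s-1-j) * ht1
      exact mul_left_cancel₀ (ne_of_gt h1α) h2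
  have hRSall : ∀ j, j ≤ s → RS j = Pc j * RS 0 :=
    LiFengAux.seq_P s RS hRS1 hRSrec
  have hRS0 : RS 0 = LiFengAux.extS x (s-1) := by
    simp only [hRSdef]
    rw [if_neg (by omega), Nat.sub_zero]
  have hxwF : xw = Pc s * LiFengAux.extS x (s-1) := by
    have h := hRSall s le_rfl
    rw [hRS0] at h
    have e : RS s = xw := by simp [hRSdef]
    rw [e] at h; exact h
  have hXS0 : LiFengAux.extS x 0 = Pc (s-1) * LiFengAux.extS x (s-1) := by
    have h := hRSall (s-1) (by omega)
    rw [hRS0] at h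
    have e : RS (s-1) = LiFengAux.extS x 0 := by
      simp [hRSdef, show ¬ (s-1 = s) by omega, show s-1-(s-1) = 0 by omega]
    rw [e] at h; exact h
  -- construct test vector y on G(k-1, s+1)
  set CL := xw / Pc (k-1) with hCLdef
  set CS := xw / Pc (s+1) with hCSdef
  have hCL2 : CL * Pc (k-1) = xw := by
    rw [hCLdef]; exact div_mul_cancel₀ xw (ne_of_gt (hPpos (k-1)))
  have hCS2 : CS * Pc (s+1) = xw := by
    rw [hCSdef]; exact div_mul_cancel₀ xw (ne_of_gt (hPpos (s+1)))
  set y : Fin m ⊕ (Fin (k-1) ⊕ Fin (s+1)) → ℝ := fun v =>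
    match v with
    | Sum.inl a => x (Sum.inl a)
    | Sum.inr (Sum.inl i) => CL * Pc (k-2-(i:ℕ))
    | Sum.inr (Sum.inr j) => CS * Pc (s-(j:ℕ)) with hydef
  have hyl : ∀ a : Fin m, y (Sum.inl a) = x (Sum.inl a) := fun a => rfl
  have hyL : ∀ (n : ℕ) (h : n < k-1), LiFengAux.extL y n = CL * Pc (k-2-n) := by
    intro n h
    rw [LiFengAux.extL_of_lt h]
  have hyS : ∀ (n : ℕ) (h : n < s+1), LiFengAux.extS y n = CS * Pc (s-n) := by
    intro n h
    rw [LiFengAux.extS_of_lt h]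
  set Δ := CL * Pc (k-2) + CS * Pc s - (LiFengAux.extL x 0 + LiFengAux.extS x 0) with hΔdef
  have claim : ∀ v, (Aalpha (pendantPaths G w (k-1) (s+1)) α *ᵥ y) v
      = ρ * y v + (if v = Sum.inl w then (1-α) * Δ else 0) := by
    intro v
    rw [LiFengAux.mulVec_Aalpha]
    rcases v with a | i | j
    · -- G-vertex
      rw [LiFengAux.nsum_G, LiFengAux.deg_l _ (by omega) (by omega)]
      have hxa := heq (Sum.inl a)
      rw [LiFengAux.nsum_G, LiFengAux.deg_l _ (by omega) (by omega)] at hxa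
      simp only [hyl]
      by_cases ha : a = w
      · subst ha
        rw [if_pos rfl, if_pos rfl, if_pos rfl]
        rw [if_pos rfl, if_pos rfl] at hxa
        rw [hyL 0 (by omega), hyS 0 (by omega), hΔdef]
        rw [show k-2-0 = k-2 by omega, show s-0 = s by omega]
        linear_combination hxa
      · rw [if_neg ha, if_neg ha, if_neg (fun h => ha (Sum.inl.inj h))]
        rw [if_neg ha, if_neg ha] at hxa
        linear_combination hxa
    · -- long path vertex
      obtain ⟨n, hn⟩ := i
      rw [LiFengAux.nsum_L, LiFengAux.deg_L]
      simp only [Fin.val_mk]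
      rw [if_neg Sum.inr_ne_inl]
      have hyval : y (Sum.inr (Sum.inl ⟨n, hn⟩)) = CL * Pc (k-2-n) := rfl
      rw [hyval]
      by_cases hn0 : n = 0
      · subst hn0
        rw [if_pos rfl, if_pos rfl, if_pos rfl, if_pos rfl, if_pos (by omega : 0+1 < k-1)]
        rw [hyl w, ← hxwdef, hyL (0+1) (by omega)]
        rw [show k-2-0 = k-2 by omega, show k-2-(0+1) = k-3 by omega]
        have hrec : Pc (k-1) = t * Pc (k-2) - Pc (k-3) := by
          have h := hPrec (k-3)
          rw [show k-3+2 = k-1 by omega, show k-3+1 = k-2 by omega] at h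
          exact h
        have hxwCL : xw = CL * Pc (k-1) := hCL2.symm
        rw [hxwCL, hrec]
        linear_combination CL * Pc (k-2) * ht1
      · by_cases hnend : n = k - 2
        · rw [if_neg hn0, if_neg hn0, if_neg hn0, if_neg hn0,
            if_neg (by omega : ¬ (n+1 < k-1)),
            LiFengAux.extL_of_ge (by omega : ¬ (n+1 < k-1)),
            hyL (n-1) (by omega)]
          rw [show k-2-n = 0 by omega, show k-2-(n-1) = 1 by omega]
          rw [hP0, hP1]
          linear_combination CL * hc1
        · rw [if_neg hn0, if_neg hn0, if_neg hn0, if_neg hn0,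
            if_pos (by omega : n+1 < k-1), hyL (n+1) (by omega), hyL (n-1) (by omega)]
          rw [show k-2-(n+1) = k-3-n by omega, show k-2-(n-1) = k-1-n by omega]
          have hrec : Pc (k-1-n) = t * Pc (k-2-n) - Pc (k-3-n) := by
            have h := hPrec (k-3-n)
            rw [show k-3-n+2 = k-1-n by omega, show k-3-n+1 = k-2-n by omega] at h
            exact h
          rw [hrec]
          linear_combination CL * Pc (k-2-n) * ht1
    · -- short path vertex
      obtain ⟨n, hn⟩ := j
      rw [LiFengAux.nsum_S, LiFengAux.deg_S]
      simp only [Fin.val_mk]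
      rw [if_neg Sum.inr_ne_inl]
      have hyval : y (Sum.inr (Sum.inr ⟨n, hn⟩)) = CS * Pc (s-n) := rfl
      rw [hyval]
      by_cases hn0 : n = 0
      · subst hn0
        rw [if_pos rfl, if_pos rfl, if_pos rfl, if_pos rfl, if_pos (by omega : 0+1 < s+1)]
        rw [hyl w, ← hxwdef, hyS (0+1) (by omega)]
        rw [show s-0 = s by omega, show s-(0+1) = s-1 by omega]
        have hrec : Pc (s+1) = t * Pc s - Pc (s-1) := by
          have h := hPrec (s-1)
          rw [show s-1+2 = s+1 by omega, show s-1+1 = s by omega] at h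
          exact h
        have hxwCS : xw = CS * Pc (s+1) := hCS2.symm
        rw [hxwCS, hrec]
        linear_combination CS * Pc s * ht1
      · by_cases hnend : n = s
        · rw [if_neg hn0, if_neg hn0, if_neg hn0, if_neg hn0,
            if_neg (by omega : ¬ (n+1 < s+1)),
            LiFengAux.extS_of_ge (by omega : ¬ (n+1 < s+1)),
            hyS (n-1) (by omega)]
          rw [show s-n = 0 by omega, show s-(n-1) = 1 by omega]
          rw [hP0, hP1]
          linear_combination CS * hc1
        · rw [if_neg hn0, if_neg hn0, if_neg hn0, if_neg hn0,
            if_pos (by omega : n+1 < s+1), hyS (n+1) (by omega), hyS (n-1) (by omega)]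
          rw [show s-(n+1) = s-1-n by omega, show s-(n-1) = s+1-n by omega]
          have hrec : Pc (s+1-n) = t * Pc (s-n) - Pc (s-1-n) := by
            have h := hPrec (s-1-n)
            rw [show s-1-n+2 = s+1-n by omega, show s-1-n+1 = s-n by omega] at h
            exact h
          rw [hrec]
          linear_combination CS * Pc (s-n) * ht1
  -- Rayleigh quotient of y
  have hqy : LiFengAux.q (Aalpha (pendantPaths G w (k-1) (s+1)) α) y
      = ρ * (y ⬝ᵥ y) + xw * ((1-α) * Δ) := by
    unfold LiFengAux.q
    rw [dotProduct]
    calc (∑ v, y v * (Aalpha (pendantPaths G w (k-1) (s+1)) α *ᵥ y) v)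
        = ∑ v, (ρ * (y v * y v) + (if v = Sum.inl w then y v * ((1-α) * Δ) else 0)) := by
          apply Finset.sum_congr rfl
          intro v _
          rw [claim v]
          by_cases hv : v = Sum.inl w
          · rw [if_pos hv, if_pos hv]; ring
          · rw [if_neg hv, if_neg hv]; ring
      _ = ρ * (y ⬝ᵥ y) + xw * ((1-α) * Δ) := by
          rw [Finset.sum_add_distrib, ← Finset.mul_sum,
            Finset.sum_ite_eq' Finset.univ (Sum.inl w) (fun v => y v * ((1-α) * Δ))]
          rw [if_pos (Finset.mem_univ _), dotProduct]
  -- determinant identities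
  have hd1 : Pc (k-1)^2 - Pc (k-2) * Pc k = c^2 - t*c + 1 := by
    have h := LiFengAux.P_det (t := t) (c := c) (k-2)
    rw [show k-2+1 = k-1 by omega, show k-2+2 = k by omega] at h
    exact h
  have hd2 : Pc s^2 - Pc (s-1) * Pc (s+1) = c^2 - t*c + 1 := by
    have h := LiFengAux.P_det (t := t) (c := c) (s-1)
    rw [show s-1+1 = s by omega, show s-1+2 = s+1 by omega] at h
    exact h
  have hXL0' : LiFengAux.extL x 0 * Pc k = Pc (k-1) * xw := by
    rw [hXL0, hxwE]; ring
  have hXS0' : LiFengAux.extS x 0 * Pc s = Pc (s-1) * xw := by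
    rw [hXS0, hxwF]; ring
  have hΔD : Δ * (Pc (k-1) * Pc k * Pc s * Pc (s+1))
      = xw * ((c^2 - t*c + 1) * (Pc (k-1) * Pc k - Pc s * Pc (s+1))) := by
    rw [hΔdef]
    linear_combination (Pc (k-2) * Pc k * Pc s * Pc (s+1)) * hCL2
      + (Pc s * Pc (k-1) * Pc k * Pc s) * hCS2
      - (Pc (k-1) * Pc s * Pc (s+1)) * hXL0'
      - (Pc (k-1) * Pc k * Pc (s+1)) * hXS0'
      - (xw * Pc s * Pc (s+1)) * hd1
      + (xw * Pc (k-1) * Pc k) * hd2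
  have he1 : (1:ℝ) ≤ c^2 - t*c + 1 := by nlinarith
  have hABCD : Pc s * Pc (s+1) < Pc (k-1) * Pc k := by
    have h1 : Pc s < Pc (k-1) := hPmono (by omega)
    have h2 : Pc (s+1) < Pc k := hPmono (by omega)
    have := hPpos s
    have := hPpos (s+1)
    nlinarith
  have hΔpos : 0 < Δ := by
    have hprod : 0 < Pc (k-1) * Pc k * Pc s * Pc (s+1) := by
      have := hPpos (k-1); have := hPpos k; have := hPpos s; have := hPpos (s+1)
      positivity
    have hrhs : 0 < xw * ((c^2 - t*c + 1) * (Pc (k-1) * Pc k - Pc s * Pc (s+1))) := by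
      apply mul_pos hxw
      apply mul_pos (by linarith) (by linarith)
    rw [← hΔD] at hrhs
    by_contra hcon
    push_neg at hcon
    nlinarith
  -- conclude
  have hyne : y ≠ 0 := by
    intro h0
    have h1 : y (Sum.inl w) = 0 := congrFun h0 (Sum.inl w)
    have h2 : y (Sum.inl w) = xw := rfl
    rw [h2] at h1
    exact absurd h1 (ne_of_gt hxw)
  have hfin : ρ * (y ⬝ᵥ y) < LiFengAux.q (Aalpha (pendantPaths G w (k-1) (s+1)) α) y := by
    rw [hqy]
    have : 0 < xw * ((1-α) * Δ) := by
      apply mul_pos hxw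
      exact mul_pos h1α hΔpos
    linarith
  exact LiFengAux.specRad_gt (LiFengAux.Aalpha_isSymm _ α)
    (LiFengAux.Aalpha_offdiag _ hα1.le) hyne hfin
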